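/- Let (N,ρ) be a complete metric space. Suppose that for every family {B̄(u_i, r_i)}_{i∈I} of closed balls in N indexed by an at most countable set I and satisfying ρ(u_i, u_j) ≤ r_i + r_j for all i, j ∈ I, the intersection ⋂_{i∈I} B̄(u_i, r_i) is nonempty. Then (N,ρ) satisfies the Lipschitz extension property with constant s = 1: for every separable metric space (M,d), every subset Z ⊆ M, every L ≥ 0, and every map f : Z → N with ρ(f(x),f(y)) ≤ L·d(x,y) for all x,y ∈ Z, there exists an extension of f to all of M that is Lipschitz with constant L. -/
import Mathlib


universe u v

/-- Let `N` be a complete metric space in which every at most countable family of closed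
balls `B̄(u i, r i)` with `dist (u i) (u j) ≤ r i + r j` for all `i, j` has nonempty
intersection.  Then `N` has the Lipschitz extension property with constant `s = 1`:
every `L`-Lipschitz map from a subset `Z` of a separable metric space `M` into `N`
extends to an `L`-Lipschitz map on all of `M`. -/
theorem stmt6 {N : Type v} [MetricSpace N] [CompleteSpace N]
    (hball : ∀ (ι : Type) [Countable ι] (u : ι → N) (r : ι → ℝ),
      (∀ i j : ι, dist (u i) (u j) ≤ r i + r j) →
      (⋂ i : ι, Metric.closedBall (u i) (r i)).Nonempty) :
    ∀ (M : Type u) [MetricSpace M] [TopologicalSpace.SeparableSpace M]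
      (Z : Set M) (L : ℝ), 0 ≤ L → ∀ f : Z → N,
        (∀ x y : Z, dist (f x) (f y) ≤ L * dist (x : M) (y : M)) →
        ∃ g : M → N, (∀ z : Z, g z = f z) ∧
          ∀ x y : M, dist (g x) (g y) ≤ L * dist x y := by
  intro M _ _ Z L hL f hf
  rcases isEmpty_or_nonempty M with hM | hM
  · exact ⟨fun x => isEmptyElim x, fun z => isEmptyElim (z : M), fun x => isEmptyElim x⟩
  haveI := UniformSpace.secondCountable_of_separable M
  obtain ⟨T₀, hT₀c, hT₀d⟩ := TopologicalSpace.exists_countable_dense (↥Z)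
  obtain ⟨D, hDc, hDd⟩ := TopologicalSpace.exists_countable_dense M
  set T : Set M := Subtype.val '' T₀ with hTdef
  have hTZ : T ⊆ Z := by rintro _ ⟨z, _, rfl⟩; exact z.2
  have hTc : T.Countable := hT₀c.image _
  have hSc : (T ∪ D).Countable := hTc.union hDc
  have hSd : Dense (T ∪ D) := hDd.mono Set.subset_union_right
  obtain ⟨a, ha⟩ := hSc.exists_eq_range hSd.nonempty
  -- index set (in `Type 0`) for the points of `T`
  set K : Type := {m : ℕ // a m ∈ T} with hKdef
  set fT : K → N := fun m => f ⟨a m.1, hTZ m.2⟩ with hfT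
  have hfTlip : ∀ m m' : K, dist (fT m) (fT m') ≤ L * dist (a m.1) (a m'.1) :=
    fun m m' => hf _ _
  -- one-step extension
  have step : ∀ (n : ℕ) (w : Fin n → N),
      ∃ p : N, ((∀ i j : Fin n, dist (w i) (w j) ≤ L * dist (a i) (a j)) ∧
        (∀ (i : Fin n) (z : K), dist (w i) (fT z) ≤ L * dist (a i) (a z.1))) →
        ((∀ i : Fin n, dist p (w i) ≤ L * dist (a n) (a i)) ∧
         (∀ z : K, dist p (fT z) ≤ L * dist (a n) (a z.1))) := by
    intro n w
    by_cases hInv : (∀ i j : Fin n, dist (w i) (w j) ≤ L * dist (a i) (a j)) ∧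
        (∀ (i : Fin n) (z : K), dist (w i) (fT z) ≤ L * dist (a i) (a z.1))
    · obtain ⟨p, hp⟩ := hball (Fin n ⊕ K)
        (Sum.elim w fT)
        (Sum.elim (fun i => L * dist (a n) (a i)) (fun z => L * dist (a n) (a z.1)))
        (by
          rintro (i | z) (j | z') <;> simp only [Sum.elim_inl, Sum.elim_inr] <;>
            rw [← mul_add]
          · refine (hInv.1 i j).trans (mul_le_mul_of_nonneg_left ?_ hL)
            calc dist (a i) (a j) ≤ dist (a i) (a n) + dist (a n) (a j) := dist_triangle _ _ _
              _ = dist (a n) (a i) + dist (a n) (a j) := by rw [dist_comm (a i)]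
          · refine (hInv.2 i z').trans (mul_le_mul_of_nonneg_left ?_ hL)
            calc dist (a i) (a z'.1) ≤ dist (a i) (a n) + dist (a n) (a z'.1) :=
                dist_triangle _ _ _
              _ = dist (a n) (a i) + dist (a n) (a z'.1) := by rw [dist_comm (a i)]
          · rw [dist_comm]
            refine (hInv.2 j z).trans (mul_le_mul_of_nonneg_left ?_ hL)
            calc dist (a j) (a z.1) ≤ dist (a j) (a n) + dist (a n) (a z.1) :=
                dist_triangle _ _ _
              _ = dist (a n) (a z.1) + dist (a n) (a j) := by rw [dist_comm (a j)]; ring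
          · refine (hfTlip z z').trans (mul_le_mul_of_nonneg_left ?_ hL)
            calc dist (a z.1) (a z'.1) ≤ dist (a z.1) (a n) + dist (a n) (a z'.1) :=
                dist_triangle _ _ _
              _ = dist (a n) (a z.1) + dist (a n) (a z'.1) := by rw [dist_comm (a z.1)])
      refine ⟨p, fun _ => ?_⟩
      simp only [Set.mem_iInter, Metric.mem_closedBall] at hp
      exact ⟨fun i => by simpa using hp (Sum.inl i), fun z => by simpa using hp (Sum.inr z)⟩
    · obtain ⟨p, _⟩ := hball PEmpty PEmpty.elim (fun _ => 0) (fun i => i.elim)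
      exact ⟨p, fun h => absurd h hInv⟩
  choose pt hpt using step
  -- recursive construction on the enumeration
  let w : ∀ n, Fin n → N :=
    fun n => Nat.rec Fin.elim0 (fun n prev => Fin.snoc prev (pt n prev)) n
  have hwsucc : ∀ n, w (n+1) = Fin.snoc (w n) (pt n (w n)) := fun n => rfl
  have hw : ∀ n, (∀ i j : Fin n, dist (w n i) (w n j) ≤ L * dist (a i) (a j)) ∧
      (∀ (i : Fin n) (z : K), dist (w n i) (fT z) ≤ L * dist (a i) (a z.1)) := by
    intro n
    induction n with
    | zero => exact ⟨fun i => i.elim0, fun i => i.elim0⟩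
    | succ n ih =>
      have hstep := hpt n (w n) ih
      rw [hwsucc n]
      constructor
      · intro i j
        rcases Fin.eq_castSucc_or_eq_last i with ⟨i', rfl⟩ | rfl <;>
          rcases Fin.eq_castSucc_or_eq_last j with ⟨j', rfl⟩ | rfl
        · simpa [Fin.snoc_castSucc, Fin.coe_castSucc] using ih.1 i' j'
        · simp only [Fin.snoc_castSucc, Fin.snoc_last, Fin.coe_castSucc, Fin.val_last]
          rw [dist_comm, dist_comm (a (i' : ℕ))]
          exact hstep.1 i'
        · simp only [Fin.snoc_castSucc, Fin.snoc_last, Fin.coe_castSucc, Fin.val_last]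
          exact hstep.1 j'
        · simp [mul_nonneg hL dist_nonneg]
      · intro i z
        rcases Fin.eq_castSucc_or_eq_last i with ⟨i', rfl⟩ | rfl
        · simpa [Fin.snoc_castSucc, Fin.coe_castSucc] using ih.2 i' z
        · simp only [Fin.snoc_last, Fin.val_last]
          exact hstep.2 z
  let h : ℕ → N := fun n => w (n+1) (Fin.last n)
  have hwh : ∀ (n) (i : Fin n), w n i = h i := by
    intro n
    induction n with
    | zero => exact fun i => i.elim0
    | succ n ih =>
      intro i
      rcases Fin.eq_castSucc_or_eq_last i with ⟨j, rfl⟩ | rfl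
      · rw [hwsucc n, Fin.snoc_castSucc]
        simpa [Fin.coe_castSucc] using ih j
      · rfl
  have hhlip : ∀ m n : ℕ, dist (h m) (h n) ≤ L * dist (a m) (a n) := by
    intro m n
    have h1 : m < max m n + 1 := Nat.lt_succ_of_le (le_max_left _ _)
    have h2 : n < max m n + 1 := Nat.lt_succ_of_le (le_max_right _ _)
    have := (hw (max m n + 1)).1 ⟨m, h1⟩ ⟨n, h2⟩
    rwa [hwh _ ⟨m, h1⟩, hwh _ ⟨n, h2⟩] at this
  have hhf : ∀ (n : ℕ) (z : K), dist (h n) (fT z) ≤ L * dist (a n) (a z.1) := by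
    intro n z
    have := (hw (n+1)).2 (Fin.last n) z
    simpa [Fin.val_last] using this
  -- approximation of points of M
  have hdense : ∀ (x : M) (k : ℕ), ∃ m : ℕ, dist x (a m) < 1/(k+1) := by
    intro x k
    have hx : x ∈ closure (T ∪ D) := hSd x
    rw [Metric.mem_closure_iff] at hx
    obtain ⟨y, hy, hxy⟩ := hx (1/(k+1)) (by positivity)
    rw [ha] at hy
    obtain ⟨m, rfl⟩ := hy
    exact ⟨m, hxy⟩
  choose idx hidx using hdense
  have hinv_le : ∀ k Kn : ℕ, Kn ≤ k → (1:ℝ)/(k+1) ≤ 1/(Kn+1) := by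
    intro k Kn hK
    apply one_div_le_one_div_of_le (by positivity)
    have : (Kn : ℝ) ≤ k := Nat.cast_le.mpr hK
    linarith
  have hcauchy : ∀ x : M, CauchySeq (fun k => h (idx x k)) := by
    intro x
    refine cauchySeq_of_le_tendsto_0 (fun Kn => L * (2 * (1/(Kn+1)))) ?_ ?_
    · intro j k Kn hj hk
      calc dist (h (idx x j)) (h (idx x k)) ≤ L * dist (a (idx x j)) (a (idx x k)) :=
          hhlip _ _
        _ ≤ L * (2 * (1/(Kn+1))) := by
            refine mul_le_mul_of_nonneg_left ?_ hL
            have t1 := hidx x j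
            have t2 := hidx x k
            have u1 := hinv_le j Kn hj
            have u2 := hinv_le k Kn hk
            calc dist (a (idx x j)) (a (idx x k))
                ≤ dist (a (idx x j)) x + dist x (a (idx x k)) := dist_triangle _ _ _
              _ = dist x (a (idx x j)) + dist x (a (idx x k)) := by rw [dist_comm (a _)]
              _ ≤ 2 * (1/(Kn+1)) := by linarith
    · have hten : Filter.Tendsto (fun Kn : ℕ => (1:ℝ)/(Kn+1)) Filter.atTop (nhds 0) :=
        tendsto_one_div_add_atTop_nhds_zero_nat
      simpa using ((hten.const_mul 2).const_mul L)
  have hconv : ∀ x : M, ∃ p, Filter.Tendsto (fun k => h (idx x k)) Filter.atTop (nhds p) :=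
    fun x => cauchySeq_tendsto_of_complete (hcauchy x)
  choose g hg using hconv
  -- g is L-Lipschitz
  have hglip : ∀ x y : M, dist (g x) (g y) ≤ L * dist x y := by
    intro x y
    have hd : Filter.Tendsto (fun k => dist (h (idx x k)) (h (idx y k))) Filter.atTop
        (nhds (dist (g x) (g y))) := (hg x).dist (hg y)
    have hb : Filter.Tendsto (fun k : ℕ => L * (dist x y + 2 * (1/(k+1)))) Filter.atTop
        (nhds (L * (dist x y + 2 * 0))) := by
      apply Filter.Tendsto.const_mul
      exact (tendsto_one_div_add_atTop_nhds_zero_nat.const_mul 2).const_add _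
    have hle := le_of_tendsto_of_tendsto' hd hb ?_
    · simpa using hle
    · intro k
      calc dist (h (idx x k)) (h (idx y k)) ≤ L * dist (a (idx x k)) (a (idx y k)) :=
          hhlip _ _
        _ ≤ L * (dist x y + 2 * (1/(k+1))) := by
            refine mul_le_mul_of_nonneg_left ?_ hL
            have t1 := hidx x k
            have t2 := hidx y k
            calc dist (a (idx x k)) (a (idx y k))
                ≤ dist (a (idx x k)) x + dist x y + dist y (a (idx y k)) :=
                  dist_triangle4 _ _ _ _
              _ = dist x (a (idx x k)) + dist x y + dist y (a (idx y k)) := by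
                  rw [dist_comm (a _)]
              _ ≤ dist x y + 2 * (1/(k+1)) := by linarith
  -- g agrees with fT on T
  have hgT : ∀ z : K, g (a z.1) = fT z := by
    intro z
    have hd : Filter.Tendsto (fun k => dist (h (idx (a z.1) k)) (fT z)) Filter.atTop
        (nhds (dist (g (a z.1)) (fT z))) := (hg (a z.1)).dist tendsto_const_nhds
    have hb : Filter.Tendsto (fun k : ℕ => L * (1/(k+1))) Filter.atTop (nhds (L * 0)) :=
      tendsto_one_div_add_atTop_nhds_zero_nat.const_mul L
    have hle := le_of_tendsto_of_tendsto' hd hb ?_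
    · rw [mul_zero] at hle
      exact dist_le_zero.mp hle
    · intro k
      refine (hhf _ z).trans (mul_le_mul_of_nonneg_left ?_ hL)
      have := hidx (a z.1) k
      rw [dist_comm] at this
      exact this.le
  refine ⟨g, ?_, hglip⟩
  intro z
  have key : ∀ ε : ℝ, 0 < ε → dist (g (z : M)) (f z) ≤ 2 * L * ε := by
    intro ε hε
    have hz := hT₀d z
    rw [Metric.mem_closure_iff] at hz
    obtain ⟨t, htT₀, htd⟩ := hz ε hε
    have htT : (t : M) ∈ T := ⟨t, htT₀, rfl⟩
    have htS : (t : M) ∈ Set.range a := by rw [← ha]; exact Or.inl htT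
    obtain ⟨m, hm⟩ := htS
    have hmT : a m ∈ T := by rw [hm]; exact htT
    have hsub : dist (z : M) (t : M) < ε := by rwa [Subtype.dist_eq] at htd
    have h2 : g (t : M) = f t := by
      have := hgT ⟨m, hmT⟩
      rw [hfT] at this
      simp only at this
      rw [← hm]
      rw [this]
      exact congrArg f (Subtype.ext hm)
    have h1 : dist (g (z : M)) (g (t : M)) ≤ L * dist (z : M) (t : M) := hglip _ _
    have h3 : dist (f t) (f z) ≤ L * dist (t : M) (z : M) := hf _ _
    have h4 : dist (t : M) (z : M) = dist (z : M) (t : M) := dist_comm _ _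
    calc dist (g (z : M)) (f z)
        ≤ dist (g (z : M)) (g (t : M)) + dist (g (t : M)) (f z) := dist_triangle _ _ _
      _ = dist (g (z : M)) (g (t : M)) + dist (f t) (f z) := by rw [h2]
      _ ≤ L * dist (z : M) (t : M) + L * dist (t : M) (z : M) := add_le_add h1 h3
      _ ≤ 2 * L * ε := by rw [h4]; nlinarith
  have hle : dist (g (z : M)) (f z) ≤ 0 := by
    refine le_of_forall_pos_le_add ?_
    intro ε hε
    have hpos : (0:ℝ) < 2 * L + 1 := by linarith
    have hk := key (ε / (2 * L + 1)) (by positivity)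
    rw [zero_add]
    refine hk.trans ?_
    rw [mul_comm, div_mul_eq_mul_div, div_le_iff₀ hpos]
    nlinarith
  exact dist_le_zero.mp hle
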